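/- The even wheel W_{2k} (k ≥ 1) is Z_3-connected, and the odd wheel W_{2k+1} (k ≥ 1) is not Z_3-connected. -/

import Mathlib

open Finset

/-- A multigraph: an edge index type with two endpoint maps (a reference orientation). -/
structure Multigraph (V E : Type) where
  fst : E → V
  snd : E → V

/-- A multigraph `G` is `A`-connected: for every zero-sum function `b` there is an
orientation together with a nowhere-zero `A`-valued edge labeling whose boundary is `b`.
(Reorienting an edge corresponds to negating its value, so the orientation is absorbed
into the group-valued labeling relative to the reference orientation.) -/
def Multigraph.AConn {V E : Type} [Fintype V] [Fintype E] [DecidableEq V]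
    (A : Type) [AddCommGroup A] (G : Multigraph V E) : Prop :=
  ∀ b : V → A, ∑ v, b v = 0 →
    ∃ f : E → A, (∀ e, f e ≠ 0) ∧
      ∀ v, ((∑ e, if G.fst e = v then f e else 0) -
            ∑ e, if G.snd e = v then f e else 0) = b v

/-- The wheel `W_k`: a `k`-cycle (rim edges indexed by `Fin k`, edge `i` joining rim
vertex `i` to rim vertex `i+1 (mod k)`) together with a center (the `Unit` vertex)
joined to every rim vertex by a spoke. -/
def wheel (k : ℕ) : Multigraph (Fin k ⊕ Unit) (Fin k ⊕ Fin k) where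
  fst e :=
    match e with
    | .inl i => .inl i
    | .inr _ => .inr ()
  snd e :=
    match e with
    | .inl i => .inl ⟨(i.1 + 1) % k, Nat.mod_lt _ i.pos⟩
    | .inr i => .inl i

open Fin.NatCast Fin.IntCast Fin.CommRing

section aux

variable {n : ℕ} [NeZero n]

private lemma val_one' (hn : 2 ≤ n) : (1 : Fin n).val = 1 := by
  simp [Fin.val_one', Nat.mod_eq_of_lt hn]

private lemma sub_one_val (hn : 2 ≤ n) (x : Fin n) (h : x.val ≠ 0) :
    (x - 1).val = x.val - 1 := by
  rw [Fin.sub_def]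
  simp only [val_one' hn]
  have hx := x.isLt
  have e : n - 1 + x.val = n + (x.val - 1) := by omega
  rw [e, Nat.add_mod_left, Nat.mod_eq_of_lt (by omega)]

private lemma succ_mk (hn : 2 ≤ n) (i : Fin n) :
    (⟨(i.1 + 1) % n, Nat.mod_lt _ i.pos⟩ : Fin n) = i + 1 := by
  ext
  simp [Fin.add_def, val_one' hn]

private lemma wheel_rim_bd (hn : 2 ≤ n) (f : Fin n ⊕ Fin n → ZMod 3) (u : Fin n) :
    ((∑ e, if (wheel n).fst e = Sum.inl u then f e else 0) -
      ∑ e, if (wheel n).snd e = Sum.inl u then f e else 0)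
      = f (Sum.inl u) - (f (Sum.inl (u - 1)) + f (Sum.inr u)) := by
  rw [Fintype.sum_sum_type, Fintype.sum_sum_type]
  have h1 : ∀ i : Fin n, (wheel n).fst (Sum.inl i) = Sum.inl i := fun i => rfl
  have h2 : ∀ i : Fin n, (wheel n).fst (Sum.inr i) = (Sum.inr () : Fin n ⊕ Unit) := fun i => rfl
  have h3 : ∀ i : Fin n, (wheel n).snd (Sum.inl i) = Sum.inl (i + 1) := by
    intro i; show Sum.inl _ = _; rw [succ_mk hn]
  have h4 : ∀ i : Fin n, (wheel n).snd (Sum.inr i) = Sum.inl i := fun i => rfl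
  simp only [h1, h2, h3, h4, Sum.inl.injEq, reduceCtorEq, if_false, Finset.sum_const_zero]
  have h5 : ∀ i : Fin n, (i + 1 = u) ↔ (i = u - 1) := by
    intro i; constructor <;> intro h <;> [rw [← h]; rw [h]] <;> ring
  simp only [h5, Finset.sum_ite_eq', Finset.mem_univ, if_true]
  ring

private lemma wheel_center_bd (f : Fin n ⊕ Fin n → ZMod 3) :
    ((∑ e, if (wheel n).fst e = Sum.inr () then f e else 0) -
      ∑ e, if (wheel n).snd e = Sum.inr () then f e else 0)
      = ∑ i, f (Sum.inr i) := by
  rw [Fintype.sum_sum_type, Fintype.sum_sum_type]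
  have h1 : ∀ i : Fin n, (wheel n).fst (Sum.inl i) = Sum.inl i := fun i => rfl
  have h2 : ∀ i : Fin n, (wheel n).fst (Sum.inr i) = (Sum.inr () : Fin n ⊕ Unit) := fun i => rfl
  have h3 : ∀ i : Fin n, ∃ j : Fin n, (wheel n).snd (Sum.inl i) = Sum.inl j :=
    fun i => ⟨_, rfl⟩
  have h4 : ∀ i : Fin n, (wheel n).snd (Sum.inr i) = Sum.inl i := fun i => rfl
  have h3' : ∀ i : Fin n, ((wheel n).snd (Sum.inl i) = Sum.inr ()) = False := by
    intro i; obtain ⟨j, hj⟩ := h3 i; simp [hj]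
  simp [h1, h2, h4, h3']

private def nxt (y d : ZMod 3) : ZMod 3 := if y + d = 1 then 2 else 1

private lemma nxt_ne_zero : ∀ y d : ZMod 3, nxt y d ≠ 0 := by decide

private lemma nxt_ne : ∀ y d : ZMod 3, nxt y d ≠ y + d := by decide

private lemma exists_good (hn : 2 ≤ n) (c : Fin n → ZMod 3)
    (hcase : (∃ i0, c i0 ≠ 0) ∨ (n % 2 = 0 ∧ ∀ i, c i = 0)) :
    ∃ r : Fin n → ZMod 3, (∀ i, r i ≠ 0) ∧ ∀ i, r i - r (i - 1) ≠ c i := by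
  rcases hcase with ⟨i0, hi0⟩ | ⟨hev, hc⟩
  · -- rotation construction starting at i0
    let h : ℕ → ZMod 3 := fun j =>
      Nat.rec (c i0) (fun j ih => nxt ih (c (i0 + ((j + 1 : ℕ) : Fin n)))) j
    have h0 : h 0 = c i0 := rfl
    have hs : ∀ j, h (j + 1) = nxt (h j) (c (i0 + ((j + 1 : ℕ) : Fin n))) := fun j => rfl
    have hne : ∀ j, h j ≠ 0 := by
      intro j
      induction j with
      | zero => exact hi0
      | succ j ih => rw [hs]; exact nxt_ne_zero _ _
    refine ⟨fun i => h ((i - i0).val), fun i => hne _, fun i => ?_⟩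
    by_cases hii : i = i0
    · rw [hii]
      show h ((i0 - i0).val) - h ((i0 - 1 - i0).val) ≠ c i0
      rw [sub_self]
      simp only [Fin.val_zero, h0]
      rw [Ne, sub_eq_self]
      exact hne _
    · have hv : (i - i0).val ≠ 0 := by
        intro h'
        apply hii
        have : i - i0 = 0 := Fin.ext (by simpa using h')
        have := sub_eq_zero.mp this
        exact this
      obtain ⟨j, hj⟩ : ∃ j, (i - i0).val = j + 1 := ⟨(i - i0).val - 1, by omega⟩
      have hprev : (i - 1 - i0).val = j := by
        have e1 : i - 1 - i0 = (i - i0) - 1 := by ring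
        rw [e1, sub_one_val hn _ hv, hj]
        omega
      have hcast : (i0 + ((j + 1 : ℕ) : Fin n)) = i := by
        have e2 : ((j + 1 : ℕ) : Fin n) = i - i0 := by
          rw [← hj, Fin.cast_val_eq_self]
        rw [e2]; ring
      show h ((i - i0).val) - h ((i - 1 - i0).val) ≠ c i
      rw [hj, hprev, hs, hcast]
      intro heq
      exact nxt_ne (h j) (c i) ((sub_eq_iff_eq_add.mp heq).trans (add_comm _ _))
  · -- alternating coloring, n even
    refine ⟨fun i => if i.val % 2 = 0 then 1 else -1, ?_, ?_⟩
    · intro i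
      by_cases hp : i.val % 2 = 0 <;> simp [hp] <;> decide
    · intro i
      rw [hc i, sub_ne_zero]
      by_cases hz : i.val = 0
      · have hi : i = 0 := Fin.ext hz
        have hv : ((0 : Fin n) - 1).val = n - 1 := by
          rw [Fin.sub_def]
          simp only [val_one' hn, Fin.val_zero]
          rw [Nat.add_zero, Nat.mod_eq_of_lt (by omega)]
        rw [hi]
        show (if ((0 : Fin n)).val % 2 = 0 then (1 : ZMod 3) else -1)
            ≠ (if ((0 : Fin n) - 1).val % 2 = 0 then 1 else -1)
        rw [hv]
        have hodd : (n - 1) % 2 = 1 := by omega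
        simp [hodd]
        decide
      · have hv := sub_one_val hn i hz
        show (if i.val % 2 = 0 then (1 : ZMod 3) else -1)
            ≠ (if (i - 1).val % 2 = 0 then 1 else -1)
        rw [hv]
        have hi := Nat.one_le_iff_ne_zero.mpr hz
        by_cases hp : i.val % 2 = 0
        · have hp' : (i.val - 1) % 2 = 1 := by omega
          simp [hp, hp']; decide
        · have hp' : (i.val - 1) % 2 = 0 := by omega
          simp [hp, hp']; decide

end aux

/-- the even wheel `W_{2k}` (`k ≥ 1`) is `Z₃`-connected and the odd
wheel `W_{2k+1}` (`k ≥ 1`) is not. -/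
theorem even_wheel_Z3_odd_wheel_not (k : ℕ) (hk : 1 ≤ k) :
    (wheel (2 * k)).AConn (ZMod 3) ∧ ¬ (wheel (2 * k + 1)).AConn (ZMod 3) := by
  constructor
  · -- even wheel
    intro b hb
    haveI : NeZero (2 * k) := ⟨by omega⟩
    have hn : 2 ≤ 2 * k := by omega
    obtain ⟨r, hr0, hrc⟩ := exists_good hn (fun i => b (Sum.inl i)) (by
      by_cases hz : ∀ i : Fin (2 * k), b (Sum.inl i) = 0
      · right; exact ⟨by omega, hz⟩
      · left; push_neg at hz; exact hz)
    refine ⟨Sum.elim (fun i => r i) (fun i => r i - r (i - 1) - b (Sum.inl i)), ?_, ?_⟩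
    · rintro (i | i)
      · exact hr0 i
      · simp only [Sum.elim_inr]
        intro h
        exact hrc i (sub_eq_zero.mp h)
    · rintro (u | u)
      · rw [wheel_rim_bd hn]
        simp only [Sum.elim_inl, Sum.elim_inr]
        ring
      · cases u
        rw [wheel_center_bd]
        simp only [Sum.elim_inr]
        have hsub : ∑ i : Fin (2 * k), r (i - 1) = ∑ i, r i :=
          Fintype.sum_equiv (Equiv.subRight 1) _ _ (fun i => rfl)
        have hb' : (∑ i : Fin (2 * k), b (Sum.inl i)) + b (Sum.inr ()) = 0 := by
          rw [Fintype.sum_sum_type] at hb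
          simpa using hb
        rw [Finset.sum_sub_distrib, Finset.sum_sub_distrib, hsub, sub_self, zero_sub]
        linear_combination -hb'
  · -- odd wheel
    intro hA
    haveI : NeZero (2 * k + 1) := ⟨by omega⟩
    have hn : 2 ≤ 2 * k + 1 := by omega
    obtain ⟨f, hf0, hfb⟩ := hA 0 (by simp)
    have key : ∀ u : Fin (2 * k + 1), f (Sum.inl u) = - f (Sum.inl (u - 1)) := by
      intro u
      have h := hfb (Sum.inl u)
      rw [wheel_rim_bd hn] at h
      have h3 : ∀ x y z : ZMod 3, x ≠ 0 → y ≠ 0 → z ≠ 0 → x - (y + z) = 0 → x = -y := by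
        decide
      exact h3 _ _ _ (hf0 _) (hf0 _) (hf0 _) h
    have step : ∀ j : ℕ, f (Sum.inl ((j + 1 : ℕ) : Fin (2 * k + 1)))
        = - f (Sum.inl ((j : ℕ) : Fin (2 * k + 1))) := by
      intro j
      have := key ((j + 1 : ℕ) : Fin (2 * k + 1))
      rw [this]
      congr 2
      push_cast
      ring
    have pow : ∀ j : ℕ, f (Sum.inl ((j : ℕ) : Fin (2 * k + 1)))
        = (-1) ^ j * f (Sum.inl (0 : Fin (2 * k + 1))) := by
      intro j
      induction j with
      | zero => simp
      | succ j ih => rw [step j, ih, pow_succ]; ring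
    have hfull := pow (2 * k + 1)
    rw [show (((2 * k + 1 : ℕ)) : Fin (2 * k + 1)) = 0 by simp] at hfull
    rw [Odd.neg_one_pow ⟨k, by ring⟩] at hfull
    have hx : ∀ x : ZMod 3, x ≠ 0 → x ≠ -1 * x := by decide
    exact hx _ (hf0 _) hfull
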